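/- Let a polynomial f(x) = c_0 + c_1 x + ... + c_r x^r be a nonzero univariate real polynomial. Then the number of positive real roots of f, counted with multiplicity, is at most the number of sign changes in the sequence of coefficients c_0, ..., c_r (where zeros are discarded before counting sign changes). -/

import Mathlib

open Polynomial

/-- Number of sign changes in a list of reals: discard zeros, then count
adjacent pairs with opposite signs. -/
noncomputable def signChanges (l : List ℝ) : ℕ :=
  let l' := l.filter (fun x => x ≠ 0)
  ((l'.zip l'.tail).filter (fun p => p.1 * p.2 < 0)).length

namespace DescartesAux

@[simp] theorem chain'_iff_isChain {α : Type*} {R : α → α → Prop} {l : List α} :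
    List.Chain' R l ↔ List.IsChain R l := Iff.rfl

/-- recursive count of adjacent sign changes -/
noncomputable def scAux : List ℝ → ℕ
  | x :: y :: t => (if x * y < 0 then 1 else 0) + scAux (y :: t)
  | _ => 0

lemma scAux_nil : scAux [] = 0 := by simp [scAux]
lemma scAux_single (x : ℝ) : scAux [x] = 0 := by simp [scAux]
lemma scAux_cons₂ (x y : ℝ) (t : List ℝ) :
    scAux (x :: y :: t) = (if x * y < 0 then 1 else 0) + scAux (y :: t) := by
  rw [scAux]

lemma zipTail_eq_scAux : ∀ m : List ℝ,
    ((m.zip m.tail).filter (fun p => p.1 * p.2 < 0)).length = scAux m := by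
  intro m
  induction m with
  | nil => simp [scAux_nil]
  | cons x t ih =>
    cases t with
    | nil => simp [scAux_single]
    | cons y t' =>
      rw [scAux_cons₂, ← ih]
      simp only [List.tail_cons, List.zip_cons_cons, List.filter_cons]
      by_cases h : x * y < 0 <;> simp [h]
      omega

lemma signChanges_eq (l : List ℝ) :
    signChanges l = scAux (l.filter (fun x => x ≠ 0)) := by
  unfold signChanges
  exact zipTail_eq_scAux _

lemma scAux_le_cons (x : ℝ) (m : List ℝ) : scAux m ≤ scAux (x :: m) := by
  cases m with
  | nil => simp [scAux_nil, scAux_single]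
  | cons y t => rw [scAux_cons₂]; omega

lemma sgn_pos_of_not_neg {x y : ℝ} (hx : x ≠ 0) (hy : y ≠ 0) (h : ¬ x * y < 0) :
    0 < x * y :=
  lt_of_le_of_ne (not_lt.1 h) (Ne.symm (mul_ne_zero hx hy))

lemma sgn_trans_pos_neg {x y z : ℝ} (h1 : 0 < x * y) (h2 : y * z < 0) : x * z < 0 := by
  have hy : y ≠ 0 := by rintro rfl; simp at h1
  have hy2 : 0 < y * y := lt_of_le_of_ne (mul_self_nonneg y) (Ne.symm (mul_ne_zero hy hy))
  nlinarith

lemma sgn_trans_neg_neg {x y z : ℝ} (h1 : x * y < 0) (h2 : y * z < 0) : 0 < x * z := by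
  have hy : y ≠ 0 := by rintro rfl; simp at h1
  have hy2 : 0 < y * y := lt_of_le_of_ne (mul_self_nonneg y) (Ne.symm (mul_ne_zero hy hy))
  nlinarith

/-- sign changes are monotone under sublists of nonzero-entry lists, with a
strict version when the heads have opposite signs. -/
lemma scAux_sublist : ∀ (m l' : List ℝ), l'.Sublist m → (∀ x ∈ m, x ≠ 0) →
    scAux l' ≤ scAux m ∧
      (∀ x y, l'.head? = some x → m.head? = some y → x * y < 0 →
        scAux l' + 1 ≤ scAux m) := by
  intro m
  induction m with
  | nil =>
    intro l' hl' _
    rw [List.sublist_nil] at hl'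
    subst hl'
    exact ⟨le_refl _, by simp⟩
  | cons y m₁ ih =>
    intro l' hl' hnz
    have hnz₁ : ∀ x ∈ m₁, x ≠ 0 := fun x hx => hnz x (List.mem_cons_of_mem _ hx)
    have hy : y ≠ 0 := hnz y (List.mem_cons_self)
    cases hl' with
    | cons _ h =>
      -- l' <+ m₁  (skip y)
      obtain ⟨h1, h2⟩ := ih l' h hnz₁
      constructor
      · exact h1.trans (scAux_le_cons _ _)
      · rintro x y' hx hy' hxy
        have : y = y' := by simpa using hy'
        subst this
        cases l' with
        | nil => simp at hx
        | cons x' r =>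
          have : x' = x := by simpa using hx
          subst this
          cases m₁ with
          | nil => simp at h
          | cons z m₂ =>
            have hz : z ≠ 0 := hnz₁ z (List.mem_cons_self)
            by_cases hyz : y * z < 0
            · rw [scAux_cons₂, if_pos hyz]
              omega
            · have hyz' : 0 < z * y :=
                mul_comm y z ▸ sgn_pos_of_not_neg hy hz hyz
            
              have hxz : x' * z < 0 := by
                have := sgn_trans_pos_neg hyz' (mul_comm x' y ▸ hxy)
                linarith [mul_comm z x']
              have := h2 x' z rfl rfl hxz
              calc scAux (x' :: r) + 1 ≤ scAux (z :: m₂) := this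
                _ ≤ scAux (y :: z :: m₂) := scAux_le_cons _ _
    | @cons_cons r _ _ h =>
      -- l' = y :: r with r <+ m₁
      obtain ⟨h1, h2⟩ := ih r h hnz₁
      constructor
      · -- scAux (y :: r) ≤ scAux (y :: m₁)
        cases r with
        | nil => simp [scAux_single]
        | cons w r' =>
          have hw : w ≠ 0 := hnz₁ w (h.subset (List.mem_cons_self))
          rw [scAux_cons₂]
          cases m₁ with
          | nil => simp at h
          | cons z m₂ =>
            have hz : z ≠ 0 := hnz₁ z (List.mem_cons_self)
            rw [scAux_cons₂]
            by_cases hyw : y * w < 0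
            · rw [if_pos hyw]
              by_cases hyz : y * z < 0
              · rw [if_pos hyz]; omega
              · rw [if_neg hyz]
                have hyz' : 0 < z * y :=
                  mul_comm y z ▸ sgn_pos_of_not_neg hy hz hyz
                have hwz : w * z < 0 := by
                  have := sgn_trans_pos_neg hyz' hyw
                  linarith [mul_comm z w, mul_comm w z]
                have := h2 w z rfl rfl hwz
                omega
            · rw [if_neg hyw]
              omega
      · rintro x y' hx hy' hxy
        have hx' : y = x := by simpa using hx
        have hy'' : y = y' := by simpa using hy'
        subst hx'; subst hy''
        exact absurd hxy (by nlinarith [mul_self_nonneg y])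

lemma chain_length : ∀ l' : List ℝ, l'.Chain' (fun x y => x * y < 0) → l' ≠ [] →
    l'.length = scAux l' + 1 := by
  intro l'
  induction l' with
  | nil => intro _ h; exact absurd rfl h
  | cons x t ih =>
    intro hc _
    cases t with
    | nil => simp [scAux_single]
    | cons y t' =>
      rw [chain'_iff_isChain, List.isChain_cons_cons] at hc
      rw [scAux_cons₂, if_pos hc.1]
      have := ih hc.2 (by simp)
      simp only [List.length_cons] at this ⊢
      omega

/-- L1: an alternating sublist bounds the number of sign changes from below. -/
lemma length_le_signChanges (l l' : List ℝ) (hsub : l'.Sublist l)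
    (hnz : ∀ x ∈ l', x ≠ 0) (hchain : l'.Chain' (fun x y => x * y < 0))
    (hne : l' ≠ []) : l'.length ≤ signChanges l + 1 := by
  have h1 : l'.filter (fun x => x ≠ 0) = l' :=
    List.filter_eq_self.2 (by intro x hx; simpa using hnz x hx)
  have hsub2 : l'.Sublist (l.filter (fun x => x ≠ 0)) := h1 ▸ hsub.filter _
  have hnzf : ∀ x ∈ l.filter (fun x => x ≠ 0), x ≠ 0 := by
    intro x hx
    simpa using (List.mem_filter.1 hx).2
  have := (scAux_sublist _ _ hsub2 hnzf).1
  rw [signChanges_eq, chain_length l' hchain hne] at *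
  omega

/-- L2: extraction of a maximal alternating sublist. -/
lemma exists_alt : ∀ m : List ℝ, m ≠ [] → (∀ x ∈ m, x ≠ 0) →
    ∃ l' x tl, l' = x :: tl ∧ l'.Sublist m ∧ l'.Chain' (fun x y => x * y < 0) ∧
      l'.length = scAux m + 1 ∧ m.head? = some x := by
  intro m
  induction m with
  | nil => intro h; exact absurd rfl h
  | cons x t ih =>
    intro _ hnz
    have hx : x ≠ 0 := hnz x (List.mem_cons_self)
    cases t with
    | nil =>
      exact ⟨[x], x, [], rfl, List.Sublist.refl _, by simp, by simp [scAux_single, scAux_nil], rfl⟩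
    | cons y t' =>
      have hnz' : ∀ z ∈ y :: t', z ≠ 0 := fun z hz => hnz z (List.mem_cons_of_mem _ hz)
      have hy : y ≠ 0 := hnz' y (List.mem_cons_self)
      obtain ⟨l', x', tl, rfl, hsub, hchain, hlen, hhead⟩ := ih (by simp) hnz'
      have hx' : y = x' := by simpa using hhead
      subst hx'
      by_cases hxy : x * y < 0
      · refine ⟨x :: y :: tl, x, y :: tl, rfl, hsub.cons₂ x, ?_, ?_, rfl⟩
        · rw [chain'_iff_isChain, List.isChain_cons_cons]; exact ⟨hxy, hchain⟩
        · rw [scAux_cons₂, if_pos hxy]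
          simp only [List.length_cons] at hlen ⊢
          omega
      · have hxy' : 0 < x * y := sgn_pos_of_not_neg hx hy hxy
        have htl : tl.Sublist t' := (List.cons_sublist_cons).1 hsub
        refine ⟨x :: tl, x, tl, rfl, ((htl.cons y).cons₂ x), ?_, ?_, rfl⟩
        · cases tl with
          | nil => simp
          | cons w tl' =>
            rw [chain'_iff_isChain, List.isChain_cons_cons] at hchain ⊢
            exact ⟨sgn_trans_pos_neg hxy' hchain.1, hchain.2⟩
        · rw [scAux_cons₂, if_neg hxy]
          simp only [List.length_cons] at hlen ⊢
          omega

lemma opp_of_pos_pos_neg {p q u v : ℝ} (h1 : 0 < p * u) (h2 : 0 < q * v)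
    (h3 : u * v < 0) : p * q < 0 := by
  by_contra hc
  push_neg at hc
  have h4 : (p * q) * (u * v) ≤ 0 := mul_nonpos_of_nonneg_of_nonpos hc h3.le
  nlinarith [mul_pos h1 h2]

lemma exists_opp (s : Finset ℕ) (w : ℕ → ℝ) (e : ℝ)
    (h : (∑ t ∈ s, w t) * e < 0) : ∃ t ∈ s, w t * e < 0 := by
  by_contra hc
  push_neg at hc
  have : 0 ≤ (∑ t ∈ s, w t) * e := by
    rw [Finset.sum_mul]
    exact Finset.sum_nonneg fun i hi => hc i hi
  linarith

lemma sorted_sublist_range {T : List ℕ} {n : ℕ} (hp : T.Pairwise (· < ·))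
    (hb : ∀ t ∈ T, t < n) : T.Sublist (List.range n) := by
  have h1 : T.Subperm (List.range n) :=
    List.subperm_of_subset (hp.imp ne_of_lt) fun t ht => List.mem_range.2 (hb t ht)
  exact List.sublist_of_subperm_of_pairwise (r := (· ≤ ·)) h1 (hp.imp le_of_lt)
    ((List.pairwise_lt_range (n := n)).imp le_of_lt)

section Key

variable {a : ℝ} {g : Polynomial ℝ}

/-- Key lemma: multiplying by `(X - a)` with `a > 0` increases the number of
coefficient sign changes. -/
lemma key (ha : 0 < a) (hg : g ≠ 0) :
    signChanges ((List.range (g.natDegree + 1)).map g.coeff) + 1 ≤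
      signChanges ((List.range (((X - C a) * g).natDegree + 1)).map
        ((X - C a) * g).coeff) := by
  set f := (X - C a) * g with hf
  set s := g.natDegree with hs
  have hfne : f ≠ 0 := mul_ne_zero (X_sub_C_ne_zero a) hg
  have hdeg : f.natDegree = s + 1 := by
    rw [hf, Polynomial.natDegree_mul (X_sub_C_ne_zero a) hg, natDegree_X_sub_C]
    omega
  -- the telescoping weight function
  set W : ℕ → ℝ := fun t => a ^ t * (X * g).coeff t with hW
  have hW0 : W 0 = 0 := by
    simp [hW, Polynomial.mul_coeff_zero]
  have hWsucc : ∀ i : ℕ, W (i + 1) = a ^ (i + 1) * g.coeff i := by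
    intro i; simp [hW, Polynomial.coeff_X_mul]
  have hWtop : W (s + 2) = 0 := by
    rw [show s + 2 = (s + 1) + 1 by rfl, hWsucc]
    rw [Polynomial.coeff_eq_zero_of_natDegree_lt (by omega)]
    ring
  have hcoeff : ∀ t : ℕ, a ^ t * f.coeff t = W t - W (t + 1) := by
    intro t
    rw [hf, sub_mul, Polynomial.coeff_sub, Polynomial.coeff_C_mul, hWsucc, hW]
    simp only []
    ring
  have hsum : ∀ n : ℕ, ∑ t ∈ Finset.range n, a ^ t * f.coeff t = - W n := by
    intro n
    rw [Finset.sum_congr rfl fun t _ => hcoeff t, Finset.sum_range_sub' W n, hW0]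
    ring
  have hblock : ∀ i j : ℕ, i ≤ j →
      ∑ t ∈ Finset.Ico (i + 1) (j + 1), a ^ t * f.coeff t = W (i + 1) - W (j + 1) := by
    intro i j hij
    rw [Finset.sum_Ico_eq_sub _ (by omega : i + 1 ≤ j + 1), hsum, hsum]
    ring
  -- picking an element of prescribed sign from a block
  have pick : ∀ (i j : ℕ) (e : ℝ), i ≤ j → (W (i + 1) - W (j + 1)) * e < 0 →
      ∃ t, i + 1 ≤ t ∧ t ≤ j ∧ f.coeff t * e < 0 := by
    intro i j e hij he
    obtain ⟨t, ht, hte⟩ := exists_opp (Finset.Ico (i + 1) (j + 1))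
      (fun t => a ^ t * f.coeff t) e (by rw [hblock i j hij]; exact he)
    rw [Finset.mem_Ico] at ht
    refine ⟨t, ht.1, by omega, ?_⟩
    nlinarith [pow_pos ha t]
  have pick0 : ∀ (i : ℕ) (e : ℝ), (- W (i + 1)) * e < 0 →
      ∃ t, t ≤ i ∧ f.coeff t * e < 0 := by
    intro i e he
    obtain ⟨t, ht, hte⟩ := exists_opp (Finset.range (i + 1))
      (fun t => a ^ t * f.coeff t) e (by rw [hsum]; exact he)
    rw [Finset.mem_range] at ht
    refine ⟨t, by omega, ?_⟩
    nlinarith [pow_pos ha t]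
  -- the main induction over the alternating index list
  have rest : ∀ (js : List ℕ), ∀ i : ℕ, i ≤ s →
      List.Chain' (· < ·) (i :: js) → (∀ j ∈ js, j ≤ s) →
      List.Chain' (fun u v => g.coeff u * g.coeff v < 0) (i :: js) →
      g.coeff i ≠ 0 →
      ∃ t₀ tl, List.Chain' (· < ·) (t₀ :: tl) ∧
        (∀ t ∈ t₀ :: tl, i < t ∧ t ≤ s + 1) ∧
        (t₀ :: tl : List ℕ).length = js.length + 1 ∧
        List.Chain' (fun x y => x * y < 0) ((t₀ :: tl).map f.coeff) ∧
        (∀ t ∈ t₀ :: tl, f.coeff t ≠ 0) ∧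
        0 < f.coeff t₀ * g.coeff i := by
    intro js
    induction js with
    | nil =>
      intro i hi _ _ _ hbi
      have hsum0 : (W (i + 1) - W (s + 1 + 1)) * (- g.coeff i) < 0 := by
        rw [hWtop, hWsucc]
        have := pow_pos ha (i + 1)
        have h2 : 0 < g.coeff i * g.coeff i :=
          lt_of_le_of_ne (mul_self_nonneg _) (Ne.symm (mul_ne_zero hbi hbi))
        nlinarith
      obtain ⟨t, ht1, ht2, ht3⟩ := pick i (s + 1) (- g.coeff i) (by omega) hsum0
      have hpos : 0 < f.coeff t * g.coeff i := by nlinarith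
      exact ⟨t, [], by simp, by simp; omega, by simp, by simp,
        by simp; intro h; rw [h] at hpos; simp at hpos, hpos⟩
    | cons i' js' ih =>
      intro i hi hlt hle hchain hbi
      rw [chain'_iff_isChain, List.isChain_cons_cons] at hlt hchain
      have hbi' : g.coeff i' ≠ 0 := by
        intro h; rw [h, mul_zero] at hchain; exact lt_irrefl 0 hchain.1
      obtain ⟨t₀', tl', hch', hbd', hlen', hmap', hnz', hsgn'⟩ :=
        ih i' (hle i' (List.mem_cons_self)) hlt.2
          (fun j hj => hle j (List.mem_cons_of_mem _ hj)) hchain.2 hbi'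
      have hii' : i < i' := hlt.1
      have hopp : g.coeff i * g.coeff i' < 0 := hchain.1
      -- pick in the block (i, i']
      have hsum1 : (W (i + 1) - W (i' + 1)) * (- g.coeff i) < 0 := by
        rw [hWsucc, hWsucc]
        have := pow_pos ha (i + 1)
        have := pow_pos ha (i' + 1)
        have h2 : 0 < g.coeff i * g.coeff i :=
          lt_of_le_of_ne (mul_self_nonneg _) (Ne.symm (mul_ne_zero hbi hbi))
        nlinarith
      obtain ⟨t, ht1, ht2, ht3⟩ := pick i i' (- g.coeff i) (by omega) hsum1
      have hpos : 0 < f.coeff t * g.coeff i := by nlinarith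
      have htlt : t < t₀' := lt_of_le_of_lt ht2 (hbd' t₀' (List.mem_cons_self)).1
      refine ⟨t, t₀' :: tl', ?_, ?_, ?_, ?_, ?_, hpos⟩
      · rw [chain'_iff_isChain, List.isChain_cons_cons]; exact ⟨htlt, hch'⟩
      · intro u hu
        rcases List.mem_cons.1 hu with rfl | hu
        · exact ⟨by omega, by have := hle i' (List.mem_cons_self); omega⟩
        · have := hbd' u hu; omega
      · simp only [List.length_cons] at hlen' ⊢; omega
      · rw [List.map_cons, List.map_cons, chain'_iff_isChain, List.isChain_cons_cons]
        refine ⟨?_, by rw [← List.map_cons]; exact hmap'⟩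
        exact opp_of_pos_pos_neg hpos hsgn' hopp
      · intro u hu
        rcases List.mem_cons.1 hu with rfl | hu
        · intro h; rw [h] at hpos; simp at hpos
        · exact hnz' u hu
  -- extract the alternating sublist of g's coefficients
  set Lg : List ℝ := (List.range (s + 1)).map g.coeff with hLg
  have hmem : g.coeff s ∈ Lg := List.mem_map.2 ⟨s, by simp, rfl⟩
  have hgs : g.coeff s ≠ 0 := by
    rw [hs]; exact Polynomial.leadingCoeff_ne_zero.2 hg
  have hfil_ne : Lg.filter (fun x => x ≠ 0) ≠ [] :=
    List.ne_nil_of_mem (List.mem_filter.2 ⟨hmem, by simpa using hgs⟩)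
  have hfil_nz : ∀ x ∈ Lg.filter (fun x => x ≠ 0), x ≠ 0 := by
    intro x hx; simpa using (List.mem_filter.1 hx).2
  obtain ⟨l', x, tl, hl'eq, hl'sub, hl'chain, hl'len, _⟩ :=
    exists_alt (Lg.filter (fun x => x ≠ 0)) hfil_ne hfil_nz
  have hl'nz : ∀ y ∈ l', y ≠ 0 := fun y hy => hfil_nz y (hl'sub.subset hy)
  have hl'subLg : l'.Sublist Lg := hl'sub.trans List.filter_sublist
  obtain ⟨js, hjs, rfl⟩ := List.sublist_map_iff.1 hl'subLg
  have hjs_pw : js.Pairwise (· < ·) := List.pairwise_lt_range.sublist hjs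
  have hjs_le : ∀ j ∈ js, j ≤ s := fun j hj => by
    have := List.mem_range.1 (hjs.subset hj); omega
  have hjs_nz : ∀ j ∈ js, g.coeff j ≠ 0 := fun j hj =>
    hl'nz _ (List.mem_map_of_mem hj)
  have hjs_chain : List.Chain' (fun u v => g.coeff u * g.coeff v < 0) js :=
    (List.isChain_map _).1 hl'chain
  cases js with
  | nil => simp at hl'eq
  | cons i js'' =>
    have hi_le : i ≤ s := hjs_le i (List.mem_cons_self)
    have hbi : g.coeff i ≠ 0 := hjs_nz i (List.mem_cons_self)
    -- first pick in [0, i]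
    have hsum0 : (- W (i + 1)) * (g.coeff i) < 0 := by
      rw [hWsucc]
      have := pow_pos ha (i + 1)
      have h2 : 0 < g.coeff i * g.coeff i :=
        lt_of_le_of_ne (mul_self_nonneg _) (Ne.symm (mul_ne_zero hbi hbi))
      nlinarith
    obtain ⟨t, htle, htneg⟩ := pick0 i (g.coeff i) hsum0
    obtain ⟨t₀, tl₀, hch, hbd, hlen, hmap, hnz, hsgn⟩ :=
      rest js'' i hi_le (hjs_pw.isChain) (fun j hj => hjs_le j (List.mem_cons_of_mem _ hj))
        hjs_chain hbi
    -- assemble the full alternating list for f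
    have hTch : List.Chain' (· < ·) (t :: t₀ :: tl₀) := by
      rw [chain'_iff_isChain, List.isChain_cons_cons]
      exact ⟨lt_of_le_of_lt htle (hbd t₀ (List.mem_cons_self)).1, hch⟩
    have hTbd : ∀ u ∈ t :: t₀ :: tl₀, u < f.natDegree + 1 := by
      intro u hu
      rcases List.mem_cons.1 hu with rfl | hu
      · omega
      · have := hbd u hu; omega
    have hTsub : ((t :: t₀ :: tl₀).map f.coeff).Sublist
        ((List.range (f.natDegree + 1)).map f.coeff) :=
      (sorted_sublist_range (List.isChain_iff_pairwise.1 hTch) hTbd).map _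
    have hTmap : ((t :: t₀ :: tl₀).map f.coeff).Chain' (fun x y => x * y < 0) := by
      rw [List.map_cons, List.map_cons, chain'_iff_isChain, List.isChain_cons_cons]
      refine ⟨?_, by rw [← List.map_cons]; exact hmap⟩
      have : 0 < f.coeff t₀ * g.coeff i := hsgn
      -- f.coeff t * g.coeff i < 0 and f.coeff t₀ * g.coeff i > 0
      nlinarith [lt_of_le_of_ne (mul_self_nonneg (g.coeff i)) (Ne.symm (mul_ne_zero hbi hbi))]
    have hTnz : ∀ y ∈ (t :: t₀ :: tl₀).map f.coeff, y ≠ 0 := by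
      intro y hy
      obtain ⟨u, hu, rfl⟩ := List.mem_map.1 hy
      rcases List.mem_cons.1 hu with rfl | hu
      · intro h; rw [h] at htneg; simp at htneg
      · exact hnz u hu
    have hfin := length_le_signChanges _ _ hTsub hTnz hTmap (by simp)
    have hl'len' : (List.map g.coeff (i :: js'')).length =
        signChanges Lg + 1 := by
      rw [signChanges_eq]
      exact hl'len
    simp only [List.length_map, List.length_cons] at hfin hlen hl'len'
    omega

end Key

end DescartesAux

/-- Descartes' rule of signs (bound only): the number of positive real roots of
a nonzero real polynomial, counted with multiplicity, is at most the number of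
sign changes in its coefficient sequence. -/
theorem descartes_rule_of_signs_bound (f : Polynomial ℝ) (hf : f ≠ 0) :
    Multiset.card (f.roots.filter (fun x => 0 < x)) ≤
      signChanges ((List.range (f.natDegree + 1)).map f.coeff) := by
  suffices H : ∀ (n : ℕ) (f : Polynomial ℝ), f ≠ 0 →
      Multiset.card (f.roots.filter (fun x => 0 < x)) = n →
      n ≤ signChanges ((List.range (f.natDegree + 1)).map f.coeff) from
    H _ f hf rfl
  intro n
  induction n with
  | zero => intro f hf _; exact Nat.zero_le _
  | succ n ih =>
    intro f hf hcard
    have hne : f.roots.filter (fun x => 0 < x) ≠ 0 := by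
      intro h; rw [h] at hcard; simp at hcard
    obtain ⟨a, ha⟩ := Multiset.exists_mem_of_ne_zero hne
    rw [Multiset.mem_filter] at ha
    obtain ⟨haroot, hapos⟩ := ha
    have hroot : f.IsRoot a := ((Polynomial.mem_roots').1 haroot).2
    obtain ⟨g, hfg⟩ := Polynomial.dvd_iff_isRoot.2 hroot
    have hg : g ≠ 0 := by rintro rfl; rw [mul_zero] at hfg; exact hf hfg
    subst hfg
    have hXa : (X - C a : Polynomial ℝ) ≠ 0 := Polynomial.X_sub_C_ne_zero a
    rw [Polynomial.roots_mul (mul_ne_zero hXa hg), Polynomial.roots_X_sub_C,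
      Multiset.singleton_add, Multiset.filter_cons_of_pos _ hapos,
      Multiset.card_cons] at hcard
    have hcard' : Multiset.card (Multiset.filter (fun x => 0 < x) g.roots) + 1 = n + 1 := hcard
    have hcg : Multiset.card ((g.roots).filter (fun x => 0 < x)) = n := by omega
    have hih := ih g hg hcg
    have hkey := DescartesAux.key hapos hg
    omega
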